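/- Let g = e^{2f₁}g₁ + e^{2f₂}g₂ on M = M₁ × M₂ and let ∇ be the adapted Weyl connection with Lee form θ^g = −d₁f₂ − d₂f₁. Denote by θ₂ := −d₂f₁ the restriction of θ^g to TM₂. Then for every vector field X₁ lifted from M₁ and X₂ lifted from M₂, (∇_{X₁}θ₂)(X₂) = −(d₁d₂f₁)(X₁, X₂). Consequently, θ₂ is ∇-parallel in the direction of TM₁ if and only if d₁d₂f₁ = 0. -/

import Mathlib

open Real
open scoped ContDiff

noncomputable section

/-- A Riemannian metric on the "vector space manifold" `E`, encoded as a smooth family of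
symmetric positive definite bilinear forms, given as a raw function `g : E → E → E → ℝ`. -/
structure IsRiemannianMetric {E : Type*} [NormedAddCommGroup E] [NormedSpace ℝ E]
    (g : E → E → E → ℝ) : Prop where
  smooth : ∀ u v : E, ContDiff ℝ ∞ (fun x => g x u v)
  symm : ∀ x u v, g x u v = g x v u
  add_left : ∀ x u u' v, g x (u + u') v = g x u v + g x u' v
  smul_left : ∀ x (c : ℝ) (u v : E), g x (c • u) v = c * g x u v
  posdef : ∀ x (v : E), v ≠ 0 → 0 < g x v v

/-- `D` is the Levi-Civita covariant derivative of the metric `g`: it is metric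
(`∇ g = 0`, expressed through the Leibniz rule for `g`) and torsion-free. -/
structure IsLeviCivita {E : Type*} [NormedAddCommGroup E] [NormedSpace ℝ E]
    (g : E → E → E → ℝ) (D : (E → E) → (E → E) → (E → E)) : Prop where
  compat : ∀ X Y Z : E → E, ContDiff ℝ ∞ X → ContDiff ℝ ∞ Y → ContDiff ℝ ∞ Z → ∀ x,
    fderiv ℝ (fun y => g y (Y y) (Z y)) x (X x) =
      g x (D X Y x) (Z x) + g x (Y x) (D X Z x)
  torsion_free : ∀ X Y : E → E, ContDiff ℝ ∞ X → ContDiff ℝ ∞ Y → ∀ x,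
    D X Y x - D Y X x = fderiv ℝ Y x (X x) - fderiv ℝ X x (Y x)

/-- `D` is a Weyl connection for the (conformal class of the) metric `g`, with Lee form `θ`
with respect to `g`: it is torsion-free and satisfies `∇ g = -2 θ ⊗ g`. -/
structure IsWeylConnection {E : Type*} [NormedAddCommGroup E] [NormedSpace ℝ E]
    (g : E → E → E → ℝ) (θ : E → E → ℝ) (D : (E → E) → (E → E) → (E → E)) : Prop where
  compat : ∀ X Y Z : E → E, ContDiff ℝ ∞ X → ContDiff ℝ ∞ Y → ContDiff ℝ ∞ Z → ∀ x,
    fderiv ℝ (fun y => g y (Y y) (Z y)) x (X x) =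
      -2 * θ x (X x) * g x (Y x) (Z x) + g x (D X Y x) (Z x) + g x (Y x) (D X Z x)
  torsion_free : ∀ X Y : E → E, ContDiff ℝ ∞ X → ContDiff ℝ ∞ Y → ∀ x,
    D X Y x - D Y X x = fderiv ℝ Y x (X x) - fderiv ℝ X x (Y x)

variable {E₁ E₂ : Type*} [NormedAddCommGroup E₁] [NormedSpace ℝ E₁]
  [NormedAddCommGroup E₂] [NormedSpace ℝ E₂]

/-- The vector field on `M₁ × M₂` obtained by lifting a vector field on the factor `M₁`. -/
def liftVF₁ (X : E₁ → E₁) : E₁ × E₂ → E₁ × E₂ := fun x => (X x.1, 0)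

/-- The vector field on `M₁ × M₂` obtained by lifting a vector field on the factor `M₂`. -/
def liftVF₂ (X : E₂ → E₂) : E₁ × E₂ → E₁ × E₂ := fun x => (0, X x.2)

/-- The conformal product metric `e^{2 f₁} g₁ + e^{2 f₂} g₂` on `M₁ × M₂`. -/
def conformalProductMetric (f₁ f₂ : E₁ × E₂ → ℝ) (g₁ : E₁ → E₁ → E₁ → ℝ)
    (g₂ : E₂ → E₂ → E₂ → ℝ) : (E₁ × E₂) → (E₁ × E₂) → (E₁ × E₂) → ℝ :=
  fun x u v => exp (2 * f₁ x) * g₁ x.1 u.1 v.1 + exp (2 * f₂ x) * g₂ x.2 u.2 v.2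

end

/-- Let `g = e^{2f₁}g₁ + e^{2f₂}g₂` on `M₁ × M₂` and `∇` the adapted Weyl
connection with Lee form `θ^g = −d₁f₂ − d₂f₁`; let `θ₂ := −d₂f₁` be the restriction of `θ^g`
to `TM₂`.  Then for lifted vector fields `X₁, X₂`, `(∇_{X₁}θ₂)(X₂) = −(d₁d₂f₁)(X₁, X₂)`.
Consequently, `θ₂` is `∇`-parallel in the direction of `TM₁` iff `d₁d₂f₁ = 0`. -/
theorem adapted_weyl_lee_form_parallel_iff
    {E₁ E₂ : Type*} [NormedAddCommGroup E₁] [NormedSpace ℝ E₁]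
    [NormedAddCommGroup E₂] [NormedSpace ℝ E₂]
    (g₁ : E₁ → E₁ → E₁ → ℝ) (g₂ : E₂ → E₂ → E₂ → ℝ)
    (hg₁ : IsRiemannianMetric g₁) (hg₂ : IsRiemannianMetric g₂)
    (f₁ f₂ : E₁ × E₂ → ℝ) (hf₁ : ContDiff ℝ ∞ f₁) (hf₂ : ContDiff ℝ ∞ f₂)
    (Dg : (E₁ × E₂ → E₁ × E₂) → (E₁ × E₂ → E₁ × E₂) → (E₁ × E₂ → E₁ × E₂))
    (hDg : IsLeviCivita (conformalProductMetric f₁ f₂ g₁ g₂) Dg)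
    (θ : E₁ × E₂ → E₁ × E₂ → ℝ)
    (hθ : ∀ x v, θ x v = -(fderiv ℝ f₂ x (v.1, 0)) - fderiv ℝ f₁ x (0, v.2))
    (θs : E₁ × E₂ → E₁ × E₂)
    (hθs : ∀ x v, conformalProductMetric f₁ f₂ g₁ g₂ x (θs x) v = θ x v)
    -- the adapted Weyl connection
    (D : (E₁ × E₂ → E₁ × E₂) → (E₁ × E₂ → E₁ × E₂) → (E₁ × E₂ → E₁ × E₂))
    (hD : ∀ X Y x, D X Y x = Dg X Y x + θ x (X x) • Y x + θ x (Y x) • X x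
      - conformalProductMetric f₁ f₂ g₁ g₂ x (X x) (Y x) • θs x)
    -- the restriction `θ₂ = −d₂f₁` of the Lee form to `TM₂`
    (θ₂ : E₁ × E₂ → E₁ × E₂ → ℝ)
    (hθ₂ : ∀ x v, θ₂ x v = -(fderiv ℝ f₁ x ((0 : E₁), v.2))) :
    (∀ (X₁ : E₁ → E₁) (X₂ : E₂ → E₂), ContDiff ℝ ∞ X₁ → ContDiff ℝ ∞ X₂ → ∀ x,
        -- `(∇_{X₁}θ₂)(X₂) = X₁(θ₂(X₂)) − θ₂(∇_{X₁}X₂) = −(d₁d₂f₁)(X₁, X₂)`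
        fderiv ℝ (fun y => θ₂ y (liftVF₂ X₂ y)) x (liftVF₁ X₁ x)
            - θ₂ x (D (liftVF₁ X₁) (liftVF₂ X₂) x) =
          -(fderiv ℝ (fun y => fderiv ℝ f₁ y ((0 : E₁), X₂ y.2)) x (X₁ x.1, (0 : E₂))))
    ∧ ((∀ (X₁ : E₁ → E₁) (X₂ : E₂ → E₂), ContDiff ℝ ∞ X₁ → ContDiff ℝ ∞ X₂ → ∀ x,
          fderiv ℝ (fun y => θ₂ y (liftVF₂ X₂ y)) x (liftVF₁ X₁ x)
            - θ₂ x (D (liftVF₁ X₁) (liftVF₂ X₂) x) = 0) ↔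
        (∀ (x : E₁ × E₂) (v₁ : E₁) (v₂ : E₂),
          fderiv ℝ (fun y => fderiv ℝ f₁ y ((0 : E₁), v₂)) x (v₁, (0 : E₂)) = 0)) := by
  have h1le : (∞ : WithTop ℕ∞) ≠ 0 := by simp
  have hg₁0 : ∀ (z : E₁) (u : E₁), g₁ z 0 u = 0 := fun z u => by
    have h := hg₁.smul_left z 0 0 u; simpa using h
  have hg₁0' : ∀ (z : E₁) (u : E₁), g₁ z u 0 = 0 := fun z u => by
    rw [hg₁.symm]; exact hg₁0 z u
  have hg₂0 : ∀ (z : E₂) (u : E₂), g₂ z 0 u = 0 := fun z u => by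
    have h := hg₂.smul_left z 0 0 u; simpa using h
  have hg₂0' : ∀ (z : E₂) (u : E₂), g₂ z u 0 = 0 := fun z u => by
    rw [hg₂.symm]; exact hg₂0 z u
  set G := conformalProductMetric f₁ f₂ g₁ g₂ with hG
  -- linearity and symmetry of the product metric
  have Gadd : ∀ (x : E₁ × E₂) (u u' v : E₁ × E₂), G x (u + u') v = G x u v + G x u' v := by
    intro x u u' v
    simp only [hG, conformalProductMetric, Prod.fst_add, Prod.snd_add, hg₁.add_left, hg₂.add_left]
    ring
  have Gsmul : ∀ (x : E₁ × E₂) (c : ℝ) (u v : E₁ × E₂), G x (c • u) v = c * G x u v := by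
    intro x c u v
    simp only [hG, conformalProductMetric, Prod.smul_fst, Prod.smul_snd, hg₁.smul_left,
      hg₂.smul_left]
    ring
  have Gsub : ∀ (x : E₁ × E₂) (u u' v : E₁ × E₂), G x (u - u') v = G x u v - G x u' v := by
    intro x u u' v
    have h : u - u' = u + (-1 : ℝ) • u' := by rw [neg_one_smul, ← sub_eq_add_neg]
    rw [h, Gadd, Gsmul]; ring
  have Gsymm : ∀ (x : E₁ × E₂) (u v : E₁ × E₂), G x u v = G x v u := by
    intro x u v
    simp only [hG, conformalProductMetric]
    rw [hg₁.symm, hg₂.symm]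
  -- the key computation
  have key : ∀ (X₁ : E₁ → E₁) (X₂ : E₂ → E₂), ContDiff ℝ ∞ X₁ → ContDiff ℝ ∞ X₂ → ∀ x,
      fderiv ℝ (fun y => θ₂ y (liftVF₂ X₂ y)) x (liftVF₁ X₁ x)
          - θ₂ x (D (liftVF₁ X₁) (liftVF₂ X₂) x) =
        -(fderiv ℝ (fun y => fderiv ℝ f₁ y ((0 : E₁), X₂ y.2)) x (X₁ x.1, (0 : E₂))) := by
    intro X₁ X₂ hX₁ hX₂ x
    have hX : ContDiff ℝ ∞ (liftVF₁ X₁ : E₁ × E₂ → E₁ × E₂) := by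
      show ContDiff ℝ ∞ (fun y : E₁ × E₂ => (X₁ y.1, (0 : E₂)))
      exact (hX₁.comp contDiff_fst).prodMk contDiff_const
    have hY : ContDiff ℝ ∞ (liftVF₂ X₂ : E₁ × E₂ → E₁ × E₂) := by
      show ContDiff ℝ ∞ (fun y : E₁ × E₂ => ((0 : E₁), X₂ y.2))
      exact contDiff_const.prodMk (hX₂.comp contDiff_snd)
    -- first term equals minus the second derivative of f₁
    have hfun1 : (fun y => θ₂ y (liftVF₂ X₂ y))
        = fun y => -(fderiv ℝ f₁ y ((0 : E₁), X₂ y.2)) := by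
      funext y; exact hθ₂ y (liftVF₂ X₂ y)
    have hterm1 : fderiv ℝ (fun y => θ₂ y (liftVF₂ X₂ y)) x (liftVF₁ X₁ x)
        = -(fderiv ℝ (fun y => fderiv ℝ f₁ y ((0 : E₁), X₂ y.2)) x (X₁ x.1, (0 : E₂))) := by
      rw [hfun1, fderiv_fun_neg]; rfl
    rw [hterm1]
    suffices h0 : θ₂ x (D (liftVF₁ X₁) (liftVF₂ X₂) x) = 0 by rw [h0, sub_zero]
    -- notation
    set cs : E₂ := (θs x).2 with hcs
    have hYx : liftVF₂ X₂ x = ((0 : E₁), X₂ x.2) := rfl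
    have hXx : liftVF₁ X₁ x = (X₁ x.1, (0 : E₂)) := rfl
    -- θ₂ at x is the metric pairing with (0, cs)
    have hθ₂G : ∀ w : E₁ × E₂, θ₂ x w = G x w ((0 : E₁), cs) := by
      intro w
      have h1 := hθs x ((0 : E₁), w.2)
      have h2 := hθ x ((0 : E₁), w.2)
      have h3 : ((0 : E₁), (0 : E₂)) = (0 : E₁ × E₂) := rfl
      rw [h2] at h1
      simp only [h3, map_zero, neg_zero, zero_sub] at h1
      rw [hθ₂, ← h1]
      simp only [hG, conformalProductMetric]
      rw [hg₁.symm, hg₂.symm x.2 cs w.2]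
      simp [hg₁0, hg₁0']
    -- derivatives of the lifted fields
    have hYd : HasFDerivAt (liftVF₂ X₂)
        ((0 : (E₁ × E₂) →L[ℝ] E₁).prod
          ((fderiv ℝ X₂ x.2).comp (ContinuousLinearMap.snd ℝ E₁ E₂))) x :=
      (hasFDerivAt_const _ _).prodMk
        (((hX₂.differentiable h1le x.2).hasFDerivAt).comp x hasFDerivAt_snd)
    have hXd : HasFDerivAt (liftVF₁ X₁)
        (((fderiv ℝ X₁ x.1).comp (ContinuousLinearMap.fst ℝ E₁ E₂)).prod
          (0 : (E₁ × E₂) →L[ℝ] E₂)) x :=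
      (((hX₁.differentiable h1le x.1).hasFDerivAt).comp x hasFDerivAt_fst).prodMk
        (hasFDerivAt_const _ _)
    have hfY : ∀ v : E₁ × E₂, fderiv ℝ (liftVF₂ X₂) x v = ((0 : E₁), fderiv ℝ X₂ x.2 v.2) := by
      intro v; rw [hYd.fderiv]; rfl
    have hfX : ∀ v : E₁ × E₂, fderiv ℝ (liftVF₁ X₁) x v = (fderiv ℝ X₁ x.1 v.1, (0 : E₂)) := by
      intro v; rw [hXd.fderiv]; rfl
    -- torsion identities
    have tXY : Dg (liftVF₁ X₁) (liftVF₂ X₂) x = Dg (liftVF₂ X₂) (liftVF₁ X₁) x := by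
      have h := hDg.torsion_free (liftVF₁ X₁) (liftVF₂ X₂) hX hY x
      rw [hfY, hfX, hXx, hYx] at h
      simp only [map_zero] at h
      have h' : Dg (liftVF₁ X₁) (liftVF₂ X₂) x - Dg (liftVF₂ X₂) (liftVF₁ X₁) x = 0 := by
        rw [h]; simp [Prod.ext_iff]
      exact sub_eq_zero.mp h'
    have tconst : ∀ p q : E₁ × E₂,
        Dg (fun _ => p) (fun _ => q) x = Dg (fun _ => q) (fun _ => p) x := by
      intro p q
      have h := hDg.torsion_free (fun _ => p) (fun _ => q) contDiff_const contDiff_const x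
      simp only [fderiv_const_apply, ContinuousLinearMap.zero_apply, sub_self] at h
      exact sub_eq_zero.mp h
    have tZY : Dg (fun _ => ((0 : E₁), cs)) (liftVF₂ X₂) x
        = Dg (liftVF₂ X₂) (fun _ => ((0 : E₁), cs)) x + ((0 : E₁), fderiv ℝ X₂ x.2 cs) := by
      have h := hDg.torsion_free (fun _ => ((0 : E₁), cs)) (liftVF₂ X₂) contDiff_const hY x
      rw [hfY] at h
      simp only [fderiv_const_apply, ContinuousLinearMap.zero_apply, sub_zero] at h
      exact sub_eq_iff_eq_add'.mp h
    -- compat instances with identically vanishing pairings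
    have compat0 : ∀ (A B C : E₁ × E₂ → E₁ × E₂), ContDiff ℝ ∞ A → ContDiff ℝ ∞ B →
        ContDiff ℝ ∞ C → (fun y => G y (B y) (C y)) = (fun _ => (0 : ℝ)) →
        G x (Dg A B x) (C x) = - G x (B x) (Dg A C x) := by
      intro A B C hA hB hC hz
      have h := hDg.compat A B C hA hB hC x
      rw [hz] at h
      simp only [fderiv_const_apply, ContinuousLinearMap.zero_apply] at h
      linarith
    -- the one nonzero derivative
    have hd1 : HasFDerivAt (fun y : E₁ × E₂ => exp (2 * f₂ y))
        (exp (2 * f₂ x) • ((2 : ℝ) • fderiv ℝ f₂ x)) x := by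
      have h2 : HasFDerivAt f₂ (fderiv ℝ f₂ x) x := (hf₂.differentiable h1le x).hasFDerivAt
      have h3 : HasFDerivAt (fun y => 2 * f₂ y) ((2 : ℝ) • fderiv ℝ f₂ x) x := h2.const_mul 2
      exact (Real.hasDerivAt_exp (2 * f₂ x)).comp_hasFDerivAt x h3
    have hd2 : HasFDerivAt (fun y : E₁ × E₂ => g₂ y.2 cs (X₂ x.2))
        ((fderiv ℝ (fun z => g₂ z cs (X₂ x.2)) x.2).comp (ContinuousLinearMap.snd ℝ E₁ E₂)) x :=
      (((hg₂.smooth cs (X₂ x.2)).differentiable h1le x.2).hasFDerivAt).comp x hasFDerivAt_snd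
    have hGfun : (fun y => G y ((0 : E₁), cs) ((0 : E₁), X₂ x.2))
        = fun y => exp (2 * f₂ y) * g₂ y.2 cs (X₂ x.2) := by
      funext y; simp [hG, conformalProductMetric, hg₁0]
    have dval : fderiv ℝ (fun y => G y ((0 : E₁), cs) ((0 : E₁), X₂ x.2)) x (X₁ x.1, (0 : E₂))
        = 2 * fderiv ℝ f₂ x (X₁ x.1, (0 : E₂)) * (exp (2 * f₂ x) * g₂ x.2 cs (X₂ x.2)) := by
      rw [hGfun, (hd1.fun_mul hd2).fderiv]
      simp only [ContinuousLinearMap.add_apply, ContinuousLinearMap.smul_apply,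
        ContinuousLinearMap.coe_comp', Function.comp_apply, ContinuousLinearMap.coe_snd',
        smul_eq_mul]
      have hz : (fderiv ℝ (fun z => g₂ z cs (X₂ x.2)) x.2) ((X₁ x.1, (0 : E₂)).2) = 0 := by
        simp
      rw [hz]
      ring
    -- Christoffel pairing of constant fields
    have eWZV : fderiv ℝ (fun y => G y ((0 : E₁), cs) ((0 : E₁), X₂ x.2)) x (X₁ x.1, (0 : E₂))
        = G x (Dg (fun _ => (X₁ x.1, (0 : E₂))) (fun _ => ((0 : E₁), cs)) x) ((0 : E₁), X₂ x.2)
          + G x ((0 : E₁), cs)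
            (Dg (fun _ => (X₁ x.1, (0 : E₂))) (fun _ => ((0 : E₁), X₂ x.2)) x) :=
      hDg.compat _ _ _ contDiff_const contDiff_const contDiff_const x
    have eZWV : G x (Dg (fun _ => ((0 : E₁), cs)) (fun _ => (X₁ x.1, (0 : E₂))) x)
          ((0 : E₁), X₂ x.2)
        = - G x (X₁ x.1, (0 : E₂))
            (Dg (fun _ => ((0 : E₁), cs)) (fun _ => ((0 : E₁), X₂ x.2)) x) :=
      compat0 _ _ _ contDiff_const contDiff_const contDiff_const
        (by funext y; simp [hG, conformalProductMetric, hg₁0', hg₂0])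
    have eVZW : G x (Dg (fun _ => ((0 : E₁), X₂ x.2)) (fun _ => ((0 : E₁), cs)) x)
          (X₁ x.1, (0 : E₂))
        = - G x ((0 : E₁), cs)
            (Dg (fun _ => ((0 : E₁), X₂ x.2)) (fun _ => (X₁ x.1, (0 : E₂))) x) :=
      compat0 _ _ _ contDiff_const contDiff_const contDiff_const
        (by funext y; simp [hG, conformalProductMetric, hg₁0, hg₂0'])
    -- the value of the Christoffel pairing
    have haval : G x (Dg (fun _ => ((0 : E₁), cs)) (fun _ => (X₁ x.1, (0 : E₂))) x)
          ((0 : E₁), X₂ x.2)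
        = fderiv ℝ f₂ x (X₁ x.1, (0 : E₂)) * (exp (2 * f₂ x) * g₂ x.2 cs (X₂ x.2)) := by
      rw [dval] at eWZV
      rw [tconst (X₁ x.1, (0 : E₂)) ((0 : E₁), cs)] at eWZV
      rw [tconst ((0 : E₁), X₂ x.2) ((0 : E₁), cs)] at eVZW
      rw [tconst ((0 : E₁), X₂ x.2) (X₁ x.1, (0 : E₂))] at eVZW
      rw [Gsymm x (X₁ x.1, (0 : E₂))
        (Dg (fun _ => ((0 : E₁), cs)) (fun _ => ((0 : E₁), X₂ x.2)) x)] at eZWV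
      linarith [eWZV, eZWV, eVZW]
    -- chain through the lifted fields
    have e4 : G x (Dg (fun _ => ((0 : E₁), cs)) (liftVF₂ X₂) x) (X₁ x.1, (0 : E₂))
        = -(fderiv ℝ f₂ x (X₁ x.1, (0 : E₂)) * (exp (2 * f₂ x) * g₂ x.2 cs (X₂ x.2))) := by
      have h := compat0 (fun _ => ((0 : E₁), cs)) (liftVF₂ X₂) (fun _ => (X₁ x.1, (0 : E₂)))
        contDiff_const hY contDiff_const
        (by funext y; simp [hG, conformalProductMetric, liftVF₂, hg₁0, hg₂0'])
      rw [hYx] at h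
      rw [Gsymm x ((0 : E₁), X₂ x.2)
        (Dg (fun _ => ((0 : E₁), cs)) (fun _ => (X₁ x.1, (0 : E₂))) x)] at h
      rw [haval] at h
      exact h
    have e5 : G x (Dg (liftVF₂ X₂) (fun _ => ((0 : E₁), cs)) x) (X₁ x.1, (0 : E₂))
        = -(fderiv ℝ f₂ x (X₁ x.1, (0 : E₂)) * (exp (2 * f₂ x) * g₂ x.2 cs (X₂ x.2))) := by
      have h := e4
      rw [tZY, Gadd] at h
      have hτ : G x ((0 : E₁), fderiv ℝ X₂ x.2 cs) (X₁ x.1, (0 : E₂)) = 0 := by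
        simp [hG, conformalProductMetric, hg₁0, hg₂0']
      rw [hτ, add_zero] at h
      exact h
    have e6 : G x (Dg (liftVF₂ X₂) (liftVF₁ X₁) x) ((0 : E₁), cs)
        = fderiv ℝ f₂ x (X₁ x.1, (0 : E₂)) * (exp (2 * f₂ x) * g₂ x.2 cs (X₂ x.2)) := by
      have h := compat0 (liftVF₂ X₂) (liftVF₁ X₁) (fun _ => ((0 : E₁), cs))
        hY hX contDiff_const
        (by funext y; simp [hG, conformalProductMetric, liftVF₁, hg₁0', hg₂0])
      rw [hXx] at h
      rw [Gsymm x (X₁ x.1, (0 : E₂))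
        (Dg (liftVF₂ X₂) (fun _ => ((0 : E₁), cs)) x)] at h
      rw [e5] at h
      rw [h, neg_neg]
    have e7 : G x (Dg (liftVF₁ X₁) (liftVF₂ X₂) x) ((0 : E₁), cs)
        = fderiv ℝ f₂ x (X₁ x.1, (0 : E₂)) * (exp (2 * f₂ x) * g₂ x.2 cs (X₂ x.2)) := by
      rw [tXY]; exact e6
    -- final computation
    rw [hθ₂G, hD, Gsub, Gadd, Gadd, Gsmul, Gsmul, Gsmul, e7]
    have hGXZ : G x (liftVF₁ X₁ x) ((0 : E₁), cs) = 0 := by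
      rw [hXx]; simp [hG, conformalProductMetric, hg₁0', hg₂0]
    have hGXY : G x (liftVF₁ X₁ x) (liftVF₂ X₂ x) = 0 := by
      rw [hXx, hYx]; simp [hG, conformalProductMetric, hg₁0', hg₂0]
    have hGYZ : G x (liftVF₂ X₂ x) ((0 : E₁), cs)
        = exp (2 * f₂ x) * g₂ x.2 (X₂ x.2) cs := by
      rw [hYx]; simp [hG, conformalProductMetric, hg₁0]
    have hθX : θ x (liftVF₁ X₁ x) = -(fderiv ℝ f₂ x (X₁ x.1, (0 : E₂))) := by
      rw [hθ, hXx]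
      have h3 : ((0 : E₁), (0 : E₂)) = (0 : E₁ × E₂) := rfl
      simp [h3]
    rw [hGXZ, hGXY, hGYZ, hθX, hg₂.symm x.2 cs (X₂ x.2)]
    ring
  refine ⟨key, ?_, ?_⟩
  · intro h x v₁ v₂
    have hk := key (fun _ => v₁) (fun _ => v₂) contDiff_const contDiff_const x
    have hh := h (fun _ => v₁) (fun _ => v₂) contDiff_const contDiff_const x
    rw [hh] at hk
    linarith [hk]
  · intro h X₁ X₂ hX₁ hX₂ x
    rw [key X₁ X₂ hX₁ hX₂ x]
    have hA : DifferentiableAt ℝ (fderiv ℝ f₁) x :=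
      ((hf₁.fderiv_right (m := 1) (by exact WithTop.coe_le_coe.mpr le_top)).differentiable one_ne_zero) x
    have hB : DifferentiableAt ℝ (fun y : E₁ × E₂ => ((0 : E₁), X₂ y.2)) x :=
      (differentiableAt_const _).prodMk
        (((hX₂.differentiable h1le) x.2).comp x differentiableAt_snd)
    rw [fderiv_clm_apply hA hB]
    have hBd : HasFDerivAt (fun y : E₁ × E₂ => ((0 : E₁), X₂ y.2))
        ((0 : (E₁ × E₂) →L[ℝ] E₁).prod
          ((fderiv ℝ X₂ x.2).comp (ContinuousLinearMap.snd ℝ E₁ E₂))) x :=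
      (hasFDerivAt_const _ _).prodMk
        (((hX₂.differentiable h1le x.2).hasFDerivAt).comp x hasFDerivAt_snd)
    rw [hBd.fderiv]
    have h1 : ((0 : (E₁ × E₂) →L[ℝ] E₁).prod
        ((fderiv ℝ X₂ x.2).comp (ContinuousLinearMap.snd ℝ E₁ E₂))) (X₁ x.1, (0 : E₂)) = 0 := by
      simp
    have h2 : fderiv ℝ (fderiv ℝ f₁) x (X₁ x.1, (0 : E₂)) ((0 : E₁), X₂ x.2) = 0 := by
      have hc := h x (X₁ x.1) (X₂ x.2)
      rw [fderiv_clm_apply hA (differentiableAt_const _)] at hc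
      simpa using hc
    simp only [ContinuousLinearMap.add_apply, ContinuousLinearMap.coe_comp',
      Function.comp_apply, ContinuousLinearMap.flip_apply]
    rw [h1, map_zero, h2]
    simp
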